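/- For every formula A ∈ For_BCL: A is a theorem of Ax_BCL if and only if A is valid in every binary relation R on For_BCL satisfying (a1), (a2), (b0), (b1) and (b2). -/

import Mathlib

/-- Formulas of BCL: variables, negation, conjunction, disjunction, connexive implication. -/
inductive BForm : Type
  | var : ℕ → BForm
  | neg : BForm → BForm
  | conj : BForm → BForm → BForm
  | disj : BForm → BForm → BForm
  | imp : BForm → BForm → BForm
  deriving DecidableEq

/-- Truth of a formula in a BCL model ⟨v, R⟩. -/
def bsat (v : ℕ → Bool) (R : BForm → BForm → Prop) : BForm → Prop
  | .var p => v p = true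
  | .neg B => ¬ bsat v R B
  | .conj B C => bsat v R B ∧ bsat v R C
  | .disj B C => bsat v R B ∨ bsat v R C
  | .imp B C => (¬ bsat v R B ∨ bsat v R C) ∧ R B C

/-- Validity in a relation: true in ⟨v, R⟩ for every valuation v. -/
def bvalid (R : BForm → BForm → Prop) (A : BForm) : Prop :=
  ∀ v : ℕ → Bool, bsat v R A

def condA1 (R : BForm → BForm → Prop) : Prop := ∀ A, ¬ R A (.neg A)
def condA2 (R : BForm → BForm → Prop) : Prop := ∀ A, ¬ R (.neg A) A
def condB0 (R : BForm → BForm → Prop) : Prop := ∀ A B, R A B → ¬ R A (.neg B)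
def condB1 (R : BForm → BForm → Prop) : Prop :=
  ∀ A B, R (.imp A B) (.neg (.imp A (.neg B)))
def condB2 (R : BForm → BForm → Prop) : Prop :=
  ∀ A B, R (.imp A (.neg B)) (.neg (.imp A B))
def condCUN (R : BForm → BForm → Prop) : Prop := ∀ A B, R A B → R (.neg A) (.neg B)

/-- ¬^j A : the formula A prefixed by j negations. -/
def negs : ℕ → BForm → BForm
  | 0, A => A
  | n + 1, A => .neg (negs n A)
/-- Material implication A ⊃ B, an abbreviation for ¬A ∨ B. -/
def bhimp (A B : BForm) : BForm := .disj (.neg A) B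

/-- A is a substitution instance of a classical propositional tautology:
A evaluates to true under every Boolean valuation of formulas that treats
¬, ∧, ∨ classically (variables and →-formulas count as atoms). -/
def IsTautInst (A : BForm) : Prop :=
  ∀ e : BForm → Bool,
    (∀ B, e (.neg B) = !(e B)) →
    (∀ B C, e (.conj B C) = (e B && e C)) →
    (∀ B C, e (.disj B C) = (e B || e C)) →
    e A = true

/-- Axioms of Ax_BCL. -/
inductive BAx : BForm → Prop
  | taut {A : BForm} : IsTautInst A → BAx A
  | a1 (A : BForm) : BAx (.neg (.imp A (.neg A)))
  | a2 (A : BForm) : BAx (.neg (.imp (.neg A) A))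
  | b1 (A B : BForm) : BAx (.imp (.imp A B) (.neg (.imp A (.neg B))))
  | b2 (A B : BForm) : BAx (.imp (.imp A (.neg B)) (.neg (.imp A B)))
  | impAx (A B : BForm) : BAx (bhimp (.imp A B) (bhimp A B))

/-- Theorems of a Hilbert calculus with axioms Ax and modus ponens (for ⊃). -/
inductive BThm (Ax : BForm → Prop) : BForm → Prop
  | ax {A : BForm} : Ax A → BThm Ax A
  | mp {A B : BForm} : BThm Ax A → BThm Ax (bhimp A B) → BThm Ax B

/-- Axioms of Ax_BCL-CUN : Ax_BCL plus (CUN1) and (CUN2). -/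
inductive BAxCUN : BForm → Prop
  | base {A : BForm} : BAx A → BAxCUN A
  | cun1 (A B : BForm) :
      BAxCUN (bhimp (.imp A B) (.disj (.imp (.neg A) (.neg B)) (.conj (.neg A) B)))
  | cun2 (A B : BForm) :
      BAxCUN (bhimp (.imp A B) (.imp (.neg (.neg A)) (.neg (.neg B))))

/-- Axioms of Ax_BCL^{k,l,m,n} : Ax_BCL-CUN plus (GCUN1) and (GCUN2). -/
inductive GAx (k l m n : ℕ) : BForm → Prop
  | base {A : BForm} : BAxCUN A → GAx k l m n A
  | gcun1 (A B : BForm) :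
      GAx k l m n (bhimp (.imp (negs k A) (negs l B))
        (.disj (.imp (negs m A) (negs n B)) (.conj (negs m A) (negs (n + 1) B))))
  | gcun2 (A B : BForm) :
      GAx k l m n (bhimp (.imp (negs k A) (negs l B))
        (.imp (negs (2 * m - k) A) (negs (2 * n - l) B)))

/-- Derivability from a set of premises Γ by axioms and modus ponens. -/
inductive BDeriv (Ax : BForm → Prop) (Γ : Set BForm) : BForm → Prop
  | ax {A : BForm} : Ax A → BDeriv Ax Γ A
  | prem {A : BForm} : A ∈ Γ → BDeriv Ax Γ A
  | mp {A B : BForm} : BDeriv Ax Γ A → BDeriv Ax Γ (bhimp A B) → BDeriv Ax Γ B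

/-- The class Rel^{k,l,m,n}: relations satisfying (a1), (a2), (b0), (b1), (b2),
(cun) and cun_{k,l,m,n}. -/
def RelKLMN (k l m n : ℕ) (R : BForm → BForm → Prop) : Prop :=
  condA1 R ∧ condA2 R ∧ condB0 R ∧ condB1 R ∧ condB2 R ∧ condCUN R ∧
    ∀ A B, R (negs k A) (negs l B) → R (negs m A) (negs n B)

/-- Γ is consistent in the calculus with axioms Ax. -/
def BConsistent (Ax : BForm → Prop) (Γ : Set BForm) : Prop :=
  ∃ A, ¬ BDeriv Ax Γ A

/-- Γ is maximal consistent in the calculus with axioms Ax. -/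
def BMaxCon (Ax : BForm → Prop) (Γ : Set BForm) : Prop :=
  BConsistent Ax Γ ∧ ∀ Δ : Set BForm, Γ ⊂ Δ → ¬ BConsistent Ax Δ

/-- Valuation of the first canonical model of Γ : v(p) = 1 iff p ∈ Γ. -/
noncomputable def canonV (Γ : Set BForm) : ℕ → Bool :=
  fun p => @decide (BForm.var p ∈ Γ) (Classical.propDecidable _)

/-- Relating relation of the first canonical model of Γ : R(A,B) iff A→B ∈ Γ. -/
def canonR (Γ : Set BForm) : BForm → BForm → Prop :=
  fun A B => BForm.imp A B ∈ Γ

/-- The relating relation R^¬ of the second canonical model of Γ : the least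
relation containing the relation induced by the first canonical model
and closed under the (GCUN)- and (CUN)-style clauses. -/
inductive canonR2 (k l m n : ℕ) (Γ : Set BForm) : BForm → BForm → Prop
  | base {A B : BForm} :
      bsat (canonV Γ) (canonR Γ) (.imp A B) → canonR2 k l m n Γ A B
  | gcun {A B : BForm} :
      bsat (canonV Γ) (canonR Γ) (.imp (negs k A) (negs l B)) →
      bsat (canonV Γ) (canonR Γ) (.conj (negs m A) (negs (n + 1) B)) →
      canonR2 k l m n Γ (negs m A) (negs n B)
  | cun {A B : BForm} :
      bsat (canonV Γ) (canonR Γ) (.imp A B) →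
      bsat (canonV Γ) (canonR Γ) (.conj (.neg A) B) →
      canonR2 k l m n Γ (.neg A) (.neg B)

section BCLAdequacy

open Classical

-- Tautology instances needed
private lemma tK (A B : BForm) : IsTautInst (bhimp B (bhimp A B)) := by
  intro e hn _ hd
  simp only [bhimp, hd, hn]
  cases e A <;> cases e B <;> simp

private lemma tI (A : BForm) : IsTautInst (bhimp A A) := by
  intro e hn _ hd
  simp only [bhimp, hd, hn]
  cases e A <;> simp

private lemma tS (A X B : BForm) :
    IsTautInst (bhimp (bhimp A X) (bhimp (bhimp A (bhimp X B)) (bhimp A B))) := by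
  intro e hn _ hd
  simp only [bhimp, hd, hn]
  cases e A <;> cases e X <;> cases e B <;> simp

private lemma tExp (A B : BForm) : IsTautInst (bhimp (.neg A) (bhimp A B)) := by
  intro e hn _ hd
  simp only [bhimp, hd, hn]
  cases e A <;> cases e B <;> simp

private lemma tClav (A : BForm) : IsTautInst (bhimp (bhimp (.neg A) A) A) := by
  intro e hn _ hd
  simp only [bhimp, hd, hn]
  cases e A <;> simp

private lemma tClav2 (A : BForm) : IsTautInst (bhimp (bhimp A (.neg A)) (.neg A)) := by
  intro e hn _ hd
  simp only [bhimp, hd, hn]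
  cases e A <;> simp

private lemma tConj1 (B C : BForm) : IsTautInst (bhimp (.conj B C) B) := by
  intro e hn hc hd
  simp only [bhimp, hd, hn, hc]
  cases e B <;> cases e C <;> simp

private lemma tConj2 (B C : BForm) : IsTautInst (bhimp (.conj B C) C) := by
  intro e hn hc hd
  simp only [bhimp, hd, hn, hc]
  cases e B <;> cases e C <;> simp

private lemma tConjI (B C : BForm) : IsTautInst (bhimp B (bhimp C (.conj B C))) := by
  intro e hn hc hd
  simp only [bhimp, hd, hn, hc]
  cases e B <;> cases e C <;> simp

private lemma tDisjI1 (B C : BForm) : IsTautInst (bhimp B (.disj B C)) := by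
  intro e hn _ hd
  simp only [bhimp, hd, hn]
  cases e B <;> cases e C <;> simp

private lemma tDisjI2 (B C : BForm) : IsTautInst (bhimp C (.disj B C)) := by
  intro e hn _ hd
  simp only [bhimp, hd, hn]
  cases e B <;> cases e C <;> simp

private lemma tDisjN (B C : BForm) :
    IsTautInst (bhimp (.neg B) (bhimp (.neg C) (.neg (.disj B C)))) := by
  intro e hn _ hd
  simp only [bhimp, hd, hn]
  cases e B <;> cases e C <;> simp

/-! ### Soundness -/

private lemma bax_sound {R : BForm → BForm → Prop}
    (h1 : condA1 R) (h2 : condA2 R) (h0 : condB0 R)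
    (hb1 : condB1 R) (hb2 : condB2 R) {A : BForm} (hA : BAx A) (v : ℕ → Bool) :
    bsat v R A := by
  cases hA with
  | @taut A h =>
      have he := h (fun B => decide (bsat v R B))
        (fun B => by by_cases hb : bsat v R B <;> simp [bsat, hb])
        (fun B C => by by_cases hb : bsat v R B <;> by_cases hc : bsat v R C <;> simp [bsat, hb, hc])
        (fun B C => by by_cases hb : bsat v R B <;> by_cases hc : bsat v R C <;> simp [bsat, hb, hc])
      exact of_decide_eq_true he
  | a1 A =>
      intro h
      exact h1 A h.2
  | a2 A =>
      intro h
      exact h2 A h.2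
  | b1 A B =>
      refine ⟨?_, hb1 A B⟩
      by_cases h : bsat v R (.imp A B)
      · right
        intro h'
        exact h0 A B h.2 h'.2
      · exact Or.inl h
  | b2 A B =>
      refine ⟨?_, hb2 A B⟩
      by_cases h : bsat v R (.imp A (.neg B))
      · right
        intro h'
        exact h0 A B h'.2 h.2
      · exact Or.inl h
  | impAx A B =>
      show (¬ _) ∨ _
      by_cases h : bsat v R (.imp A B)
      · right
        show (¬ _) ∨ _
        rcases h.1 with h' | h'
        · exact Or.inl h'
        · exact Or.inr h'
      · exact Or.inl h

private lemma bcl_sound {A : BForm} (h : BThm BAx A) :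
    ∀ R : BForm → BForm → Prop,
      condA1 R → condA2 R → condB0 R → condB1 R → condB2 R → bvalid R A := by
  intro R h1 h2 h0 hb1 hb2 v
  induction h with
  | ax hA => exact bax_sound h1 h2 h0 hb1 hb2 hA v
  | mp _ _ ihA ihAB =>
      rcases ihAB with h | h
      · exact absurd ihA h
      · exact h

/-! ### Derivability basics -/

private lemma thm_deriv {Γ : Set BForm} {A : BForm} (h : BThm BAx A) : BDeriv BAx Γ A := by
  induction h with
  | ax h => exact .ax h
  | mp _ _ ih1 ih2 => exact .mp ih1 ih2

private lemma deriv_mono {Γ Δ : Set BForm} (hΓΔ : Γ ⊆ Δ) {A : BForm}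
    (h : BDeriv BAx Γ A) : BDeriv BAx Δ A := by
  induction h with
  | ax h => exact .ax h
  | prem h => exact .prem (hΓΔ h)
  | mp _ _ ih1 ih2 => exact .mp ih1 ih2

private lemma deriv_drop {Γ : Set BForm} {A B : BForm}
    (h : BDeriv BAx (insert A Γ) B) (hA : BDeriv BAx Γ A) : BDeriv BAx Γ B := by
  induction h with
  | ax h => exact .ax h
  | prem h => rcases h with h | h
              · exact h ▸ hA
              · exact .prem h
  | mp _ _ ih1 ih2 => exact .mp ih1 ih2

/-- Deduction theorem. -/
private lemma deduction {Γ : Set BForm} {A B : BForm}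
    (h : BDeriv BAx (insert A Γ) B) : BDeriv BAx Γ (bhimp A B) := by
  induction h with
  | @ax B h => exact .mp (.ax h) (.ax (.taut (tK A B)))
  | @prem B h =>
      rcases h with h | h
      · cases h
        exact .ax (.taut (tI A))
      · exact .mp (.prem h) (.ax (.taut (tK A B)))
  | @mp X B _ _ ih1 ih2 =>
      exact .mp ih2 (.mp ih1 (.ax (.taut (tS A X B))))

private lemma derive_all {Γ : Set BForm} {A : BForm}
    (h1 : BDeriv BAx Γ A) (h2 : BDeriv BAx Γ (.neg A)) (B : BForm) : BDeriv BAx Γ B :=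
  .mp h1 (.mp h2 (.ax (.taut (tExp A B))))

private lemma not_consistent_iff {Γ : Set BForm} :
    ¬ BConsistent BAx Γ ↔ ∀ A, BDeriv BAx Γ A := by
  unfold BConsistent
  push_neg
  rfl

private lemma deriv_finite {Γ : Set BForm} {A : BForm} (h : BDeriv BAx Γ A) :
    ∃ Γ₀ : Set BForm, Γ₀ ⊆ Γ ∧ Γ₀.Finite ∧ BDeriv BAx Γ₀ A := by
  induction h with
  | @ax A h => exact ⟨∅, by simp, Set.finite_empty, .ax h⟩
  | @prem A h => exact ⟨{A}, by simpa, Set.finite_singleton A, .prem rfl⟩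
  | mp _ _ ih1 ih2 =>
      obtain ⟨Γ₁, hs1, hf1, hd1⟩ := ih1
      obtain ⟨Γ₂, hs2, hf2, hd2⟩ := ih2
      exact ⟨Γ₁ ∪ Γ₂, Set.union_subset hs1 hs2, hf1.union hf2,
        .mp (deriv_mono Set.subset_union_left hd1)
            (deriv_mono Set.subset_union_right hd2)⟩

/-! ### Lindenbaum -/

private lemma sUnion_deriv {c : Set (Set BForm)} (hchain : IsChain (· ⊆ ·) c)
    (hne : c.Nonempty) {A : BForm} (h : BDeriv BAx (⋃₀ c) A) :
    ∃ Δ ∈ c, BDeriv BAx Δ A := by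
  induction h with
  | ax h =>
      obtain ⟨Δ, hΔ⟩ := hne
      exact ⟨Δ, hΔ, .ax h⟩
  | prem h =>
      obtain ⟨Δ, hΔc, hA⟩ := h
      exact ⟨Δ, hΔc, .prem hA⟩
  | mp _ _ ih1 ih2 =>
      obtain ⟨Δ1, hΔ1c, hd1⟩ := ih1
      obtain ⟨Δ2, hΔ2c, hd2⟩ := ih2
      rcases eq_or_ne Δ1 Δ2 with rfl | hne'
      · exact ⟨Δ1, hΔ1c, .mp hd1 hd2⟩
      · rcases hchain hΔ1c hΔ2c hne' with hle | hle
        · exact ⟨Δ2, hΔ2c, .mp (deriv_mono hle hd1) hd2⟩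
        · exact ⟨Δ1, hΔ1c, .mp hd1 (deriv_mono hle hd2)⟩

private lemma lindenbaum {Γ : Set BForm} (h : BConsistent BAx Γ) :
    ∃ Δ : Set BForm, Γ ⊆ Δ ∧ BMaxCon BAx Δ := by
  obtain ⟨M, hM, hmax⟩ := zorn_subset_nonempty {Δ : Set BForm | BConsistent BAx Δ}
    (fun c hcS hchain hne => by
      refine ⟨⋃₀ c, ?_, fun s hs => Set.subset_sUnion_of_mem hs⟩
      by_contra hic
      rw [Set.mem_setOf_eq, not_consistent_iff] at hic
      have hP := sUnion_deriv hchain hne (hic (.var 0))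
      have hNP := sUnion_deriv hchain hne (hic (.neg (.var 0)))
      obtain ⟨Δ1, hΔ1c, hd1⟩ := hP
      obtain ⟨Δ2, hΔ2c, hd2⟩ := hNP
      rcases eq_or_ne Δ1 Δ2 with rfl | hne'
      · obtain ⟨W, hW⟩ := hcS hΔ1c
        exact hW (derive_all hd1 hd2 W)
      · rcases hchain hΔ1c hΔ2c hne' with hle | hle
        · obtain ⟨W, hW⟩ := hcS hΔ2c
          exact hW (derive_all (deriv_mono hle hd1) hd2 W)
        · obtain ⟨W, hW⟩ := hcS hΔ1c
          exact hW (derive_all hd1 (deriv_mono hle hd2) W))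
    Γ h
  refine ⟨M, hM, hmax.prop, fun Δ hΔ hcons => ?_⟩
  exact hΔ.2 (hmax.2 hcons hΔ.1)

/-! ### Maximal consistent set properties -/

variable {Γ : Set BForm}

private lemma mcs_closed (hΓ : BMaxCon BAx Γ) {A : BForm} (h : BDeriv BAx Γ A) :
    A ∈ Γ := by
  by_contra hA
  have hss : Γ ⊂ insert A Γ := Set.ssubset_insert hA
  have hic := hΓ.2 _ hss
  rw [not_consistent_iff] at hic
  obtain ⟨W, hW⟩ := hΓ.1
  exact hW (deriv_drop (hic W) h)

private lemma mcs_thm (hΓ : BMaxCon BAx Γ) {A : BForm} (h : BThm BAx A) : A ∈ Γ :=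
  mcs_closed hΓ (thm_deriv h)

private lemma mcs_not_both (hΓ : BMaxCon BAx Γ) {A : BForm}
    (h1 : A ∈ Γ) (h2 : BForm.neg A ∈ Γ) : False := by
  obtain ⟨W, hW⟩ := hΓ.1
  exact hW (derive_all (.prem h1) (.prem h2) W)

private lemma mcs_neg_of_not_mem (hΓ : BMaxCon BAx Γ) {A : BForm} (h : A ∉ Γ) :
    BForm.neg A ∈ Γ := by
  have hss : Γ ⊂ insert A Γ := Set.ssubset_insert h
  have hic := hΓ.2 _ hss
  rw [not_consistent_iff] at hic
  have h1 : BDeriv BAx Γ (bhimp A (.neg A)) := deduction (hic (.neg A))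
  have h2 : BDeriv BAx Γ (.neg A) := .mp h1 (.ax (.taut (tClav2 A)))
  exact mcs_closed hΓ h2

private lemma mcs_neg_iff (hΓ : BMaxCon BAx Γ) {A : BForm} :
    BForm.neg A ∈ Γ ↔ A ∉ Γ := by
  constructor
  · intro h hA
    exact mcs_not_both hΓ hA h
  · exact mcs_neg_of_not_mem hΓ

private lemma mcs_mp (hΓ : BMaxCon BAx Γ) {A B : BForm}
    (h1 : A ∈ Γ) (h2 : bhimp A B ∈ Γ) : B ∈ Γ :=
  mcs_closed hΓ (.mp (.prem h1) (.prem h2))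

private lemma mcs_conj_iff (hΓ : BMaxCon BAx Γ) {B C : BForm} :
    BForm.conj B C ∈ Γ ↔ B ∈ Γ ∧ C ∈ Γ := by
  constructor
  · intro h
    exact ⟨mcs_mp hΓ h (mcs_thm hΓ (.ax (.taut (tConj1 B C)))),
      mcs_mp hΓ h (mcs_thm hΓ (.ax (.taut (tConj2 B C))))⟩
  · rintro ⟨hB, hC⟩
    exact mcs_mp hΓ hC (mcs_mp hΓ hB (mcs_thm hΓ (.ax (.taut (tConjI B C)))))

private lemma mcs_disj_iff (hΓ : BMaxCon BAx Γ) {B C : BForm} :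
    BForm.disj B C ∈ Γ ↔ B ∈ Γ ∨ C ∈ Γ := by
  constructor
  · intro h
    by_contra hnot
    push_neg at hnot
    have hnB := mcs_neg_of_not_mem hΓ hnot.1
    have hnC := mcs_neg_of_not_mem hΓ hnot.2
    have : BForm.neg (.disj B C) ∈ Γ :=
      mcs_mp hΓ hnC (mcs_mp hΓ hnB (mcs_thm hΓ (.ax (.taut (tDisjN B C)))))
    exact mcs_not_both hΓ h this
  · rintro (hB | hC)
    · exact mcs_mp hΓ hB (mcs_thm hΓ (.ax (.taut (tDisjI1 B C))))
    · exact mcs_mp hΓ hC (mcs_thm hΓ (.ax (.taut (tDisjI2 B C))))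

/-! ### Truth lemma and canonical model -/

private lemma truth_lemma (hΓ : BMaxCon BAx Γ) :
    ∀ B : BForm, bsat (canonV Γ) (canonR Γ) B ↔ B ∈ Γ := by
  intro B
  induction B with
  | var p =>
      show canonV Γ p = true ↔ _
      simp [canonV]
  | neg B ih =>
      show (¬ bsat _ _ B) ↔ _
      rw [ih, mcs_neg_iff hΓ]
  | conj B C ihB ihC =>
      show (bsat _ _ B ∧ bsat _ _ C) ↔ _
      rw [ihB, ihC, mcs_conj_iff hΓ]
  | disj B C ihB ihC =>
      show (bsat _ _ B ∨ bsat _ _ C) ↔ _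
      rw [ihB, ihC, mcs_disj_iff hΓ]
  | imp B C ihB ihC =>
      show ((¬ bsat _ _ B ∨ bsat _ _ C) ∧ canonR Γ B C) ↔ _
      rw [ihB, ihC]
      constructor
      · exact fun h => h.2
      · intro h
        refine ⟨?_, h⟩
        by_cases hB : B ∈ Γ
        · right
          have himp : bhimp (.imp B C) (bhimp B C) ∈ Γ :=
            mcs_thm hΓ (.ax (.impAx B C))
          exact mcs_mp hΓ hB (mcs_mp hΓ h himp)
        · exact Or.inl hB

private lemma canon_conds (hΓ : BMaxCon BAx Γ) :
    condA1 (canonR Γ) ∧ condA2 (canonR Γ) ∧ condB0 (canonR Γ) ∧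
      condB1 (canonR Γ) ∧ condB2 (canonR Γ) := by
  refine ⟨?_, ?_, ?_, ?_, ?_⟩
  · intro A h
    exact mcs_not_both hΓ h (mcs_thm hΓ (.ax (.a1 A)))
  · intro A h
    exact mcs_not_both hΓ h (mcs_thm hΓ (.ax (.a2 A)))
  · intro A B h h'
    have hb1 : BForm.imp (.imp A B) (.neg (.imp A (.neg B))) ∈ Γ :=
      mcs_thm hΓ (.ax (.b1 A B))
    have himp : bhimp (.imp (.imp A B) (.neg (.imp A (.neg B)))) _ ∈ Γ :=
      mcs_thm hΓ (.ax (.impAx (.imp A B) (.neg (.imp A (.neg B)))))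
    have : BForm.neg (.imp A (.neg B)) ∈ Γ :=
      mcs_mp hΓ h (mcs_mp hΓ hb1 himp)
    exact mcs_not_both hΓ h' this
  · intro A B
    exact mcs_thm hΓ (.ax (.b1 A B))
  · intro A B
    exact mcs_thm hΓ (.ax (.b2 A B))

/-! ### Completeness -/

private lemma bcl_complete {A : BForm}
    (h : ∀ R : BForm → BForm → Prop,
      condA1 R → condA2 R → condB0 R → condB1 R → condB2 R → bvalid R A) :
    BThm BAx A := by
  by_contra hA
  -- {¬A} is consistent
  have hcons : BConsistent BAx {BForm.neg A} := by
    by_contra hic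
    rw [not_consistent_iff] at hic
    have h1 : BDeriv BAx (∅ : Set BForm) (bhimp (.neg A) A) := by
      have := hic A
      rw [show ({BForm.neg A} : Set BForm) = insert (BForm.neg A) ∅ by simp] at this
      exact deduction this
    have h2 : BDeriv BAx (∅ : Set BForm) A := .mp h1 (.ax (.taut (tClav A)))
    -- empty-premise derivations are theorems
    have : ∀ {B : BForm}, BDeriv BAx (∅ : Set BForm) B → BThm BAx B := by
      intro B hB
      induction hB with
      | ax h => exact .ax h
      | prem h => exact absurd h (Set.notMem_empty _)
      | mp _ _ ih1 ih2 => exact .mp ih1 ih2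
    exact hA (this h2)
  obtain ⟨Δ, hsub, hΔ⟩ := lindenbaum hcons
  obtain ⟨h1, h2, h0, hb1, hb2⟩ := canon_conds hΔ
  have hval := h (canonR Δ) h1 h2 h0 hb1 hb2 (canonV Δ)
  rw [truth_lemma hΔ] at hval
  exact mcs_not_both hΔ hval (hsub rfl)

end BCLAdequacy

/-- Soundness and completeness of Ax_BCL: A is a theorem of Ax_BCL iff A is
valid in every relation satisfying (a1), (a2), (b0), (b1), (b2). -/
theorem bcl_adequacy (A : BForm) :
    BThm BAx A ↔
      ∀ R : BForm → BForm → Prop,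
        condA1 R → condA2 R → condB0 R → condB1 R → condB2 R → bvalid R A := by
  exact ⟨bcl_sound, bcl_complete⟩
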